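/- Let Δ be a simplicial forest with good leaf ordering F_1,...,F_r, let m_i be the monomial of facet F_i, let Δ_i = ⟨F_1,...,F_i⟩ and J_i = (m_{i+1},...,m_r). Then for all s ≥ 1 and all 1 ≤ i ≤ r−1, (I(Δ_i)^{s+1} + J_i) : m_i = I(Δ_i)^s + (J_i : m_i). -/

import Mathlib

open MvPolynomial

section Aux

variable {k σ : Type} [Field k] [DecidableEq σ]

private lemma truncAux_prod_X_eq (t : Finset σ) :
    ∏ v ∈ t, (X v : MvPolynomial σ k) = monomial (∑ v ∈ t, Finsupp.single v 1) 1 := by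
  classical
  induction t using Finset.induction with
  | empty => simp
  | insert _ _ h ih =>
      rw [Finset.prod_insert h, Finset.sum_insert h, ih, X, monomial_mul, one_mul]

private lemma truncAux_supp_mul_monomial (f : MvPolynomial σ k) (a : σ →₀ ℕ) :
    (f * monomial a 1).support = f.support.map (addRightEmbedding a) :=
  AddMonoidAlgebra.support_coeff_mul_single (k := k) (G := σ →₀ ℕ) f 1 (by simp) a

private lemma truncAux_span_monomial_pow (S : Set (σ →₀ ℕ)) (n : ℕ) :
    (Ideal.span ((fun d => monomial d (1:k)) '' S)) ^ n =
      Ideal.span ((fun d => monomial d (1:k)) ''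
        {d | ∃ M : Multiset (σ →₀ ℕ), Multiset.card M = n ∧ (∀ a ∈ M, a ∈ S) ∧ d = M.sum}) := by
  induction n with
  | zero =>
      rw [pow_zero]
      have h : {d | ∃ M : Multiset (σ →₀ ℕ), Multiset.card M = 0 ∧ (∀ a ∈ M, a ∈ S) ∧ d = M.sum}
          = {0} := by
        ext d
        simp [Multiset.card_eq_zero]
      rw [h]
      simp [Ideal.one_eq_top, Ideal.span_singleton_eq_top]
  | succ n ih =>
      rw [pow_succ, ih, Ideal.span_mul_span']
      congr 1
      ext p
      constructor
      · rintro ⟨x, ⟨d, ⟨M, hcard, hmem, rfl⟩, rfl⟩, y, ⟨a, ha, rfl⟩, rfl⟩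
        refine ⟨M.sum + a, ⟨a ::ₘ M, by simp [hcard], ?_, by rw [Multiset.sum_cons, add_comm]⟩,
          by simp [monomial_mul]⟩
        intro b hb
        rcases Multiset.mem_cons.1 hb with h | h
        · exact h ▸ ha
        · exact hmem b h
      · rintro ⟨d, ⟨M, hcard, hmem, rfl⟩, rfl⟩
        obtain ⟨a, haM⟩ := Multiset.exists_mem_of_ne_zero
          (show M ≠ 0 by rintro rfl; simp at hcard)
        obtain ⟨M', rfl⟩ := Multiset.exists_cons_of_mem haM
        refine ⟨monomial M'.sum 1, ⟨M'.sum, ⟨M', by simpa using hcard,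
            fun b hb => hmem b (Multiset.mem_cons_of_mem hb), rfl⟩, rfl⟩,
          monomial a 1, ⟨a, hmem a (Multiset.mem_cons_self a M'), rfl⟩, ?_⟩
        simp [monomial_mul, Multiset.sum_cons, add_comm]

end Aux

/-- Lemma 4.1(2): with `Δ_i = ⟨F_1,...,F_i⟩` and `J_i = (m_{i+1},...,m_r)`, for all
`s ≥ 1` and all `i` with `1 ≤ i ≤ r - 1`,
`(I(Δ_i)^{s+1} + J_i) : m_i = I(Δ_i)^s + (J_i : m_i)`. -/
theorem truncated_powers_colon
    {k σ : Type} [Field k] [Fintype σ] [DecidableEq σ] {r : ℕ}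
    (F : Fin r → Finset σ)
    (hne : ∀ i, (F i).Nonempty)
    (hfacet : ∀ i j, i ≠ j → ¬ F i ⊆ F j)
    (hgoodleaf : ∀ i j l : Fin r, j < i → l < i →
      (F j ∩ F i ⊆ F l ∩ F i ∨ F l ∩ F i ⊆ F j ∩ F i))
    (m : Fin r → MvPolynomial σ k)
    (hm : ∀ i, m i = ∏ v ∈ F i, X v)
    (s : ℕ) (hs : 1 ≤ s)
    (i : Fin r) (hi : i.val + 1 < r) :
    Submodule.colon
        ((Ideal.span {p | ∃ j : Fin r, j ≤ i ∧ p = m j}) ^ (s + 1) +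
          Ideal.span {p | ∃ j : Fin r, i < j ∧ p = m j})
        (Ideal.span {m i}) =
      (Ideal.span {p | ∃ j : Fin r, j ≤ i ∧ p = m j}) ^ s +
        Submodule.colon (Ideal.span {p | ∃ j : Fin r, i < j ∧ p = m j})
          (Ideal.span {m i}) := by
  classical
  let e : Fin r → (σ →₀ ℕ) := fun j => ∑ v ∈ F j, Finsupp.single v 1
  have hm' : ∀ j, m j = monomial (e j) 1 := fun j => by rw [hm j, truncAux_prod_X_eq]
  have he : ∀ j v, e j v = if v ∈ F j then 1 else 0 := by
    intro j v
    show (∑ v' ∈ F j, Finsupp.single v' 1) v = _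
    rw [Finsupp.finset_sum_apply]
    simp only [Finsupp.single_apply]
    rw [Finset.sum_ite_eq' (F j) v (fun _ => 1)]
  have hsumv : ∀ (M : Multiset (σ →₀ ℕ)) (v : σ), M.sum v = (M.map fun d => d v).sum := by
    intro M v
    induction M using Multiset.induction with
    | empty => simp
    | cons a M ih => simp [ih]
  have hcomp : ∀ j l : Fin r, j ≤ i → l ≤ i →
      (F j ∩ F i ⊆ F l ∩ F i ∨ F l ∩ F i ⊆ F j ∩ F i) := by
    intro j l hj hl
    rcases eq_or_lt_of_le hj with rfl | hj'
    · right; rw [Finset.inter_self]; exact Finset.inter_subset_right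
    rcases eq_or_lt_of_le hl with rfl | hl'
    · left; rw [Finset.inter_self]; exact Finset.inter_subset_right
    exact hgoodleaf i j l hj' hl'
  have hmax : ∀ N : Multiset (Fin r), N ≠ 0 → (∀ j ∈ N, j ≤ i) →
      ∃ j₀ ∈ N, ∀ j ∈ N, F j ∩ F i ⊆ F j₀ ∩ F i := by
    intro N hN hle
    obtain ⟨j₀, hj₀, hmx⟩ := N.toFinset.exists_max_image (fun j => (F j ∩ F i).card)
      (by simpa [Multiset.toFinset_nonempty] using hN)
    refine ⟨j₀, Multiset.mem_toFinset.1 hj₀, fun j hj => ?_⟩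
    rcases hcomp j j₀ (hle j hj) (hle j₀ (Multiset.mem_toFinset.1 hj₀)) with h | h
    · exact h
    · rw [Finset.eq_of_subset_of_card_le h (hmx j (Multiset.mem_toFinset.2 hj))]
  have hlift : ∀ M : Multiset (σ →₀ ℕ), (∀ a ∈ M, ∃ j : Fin r, j ≤ i ∧ a = e j) →
      ∃ N : Multiset (Fin r), (∀ j ∈ N, j ≤ i) ∧ N.map e = M := by
    intro M
    induction M using Multiset.induction with
    | empty => intro _; exact ⟨0, by simp, by simp⟩
    | cons a M ih =>
        intro h
        obtain ⟨N, hN, hNe⟩ := ih (fun b hb => h b (Multiset.mem_cons_of_mem hb))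
        obtain ⟨j, hj, rfl⟩ := h a (Multiset.mem_cons_self a M)
        refine ⟨j ::ₘ N, ?_, by simp [hNe]⟩
        intro l hl
        rcases Multiset.mem_cons.1 hl with rfl | hl
        exacts [hj, hN l hl]
  -- the monomial-exponent sets
  set EA : Set (σ →₀ ℕ) := {a | ∃ j : Fin r, j ≤ i ∧ a = e j} with hEA
  set EB : Set (σ →₀ ℕ) := {a | ∃ j : Fin r, i < j ∧ a = e j} with hEB
  set EB' : Set (σ →₀ ℕ) := {a | ∃ j : Fin r, i < j ∧ a = e j - e i} with hEB'
  have hA : {p : MvPolynomial σ k | ∃ j : Fin r, j ≤ i ∧ p = m j}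
      = (fun d => monomial d (1:k)) '' EA := by
    ext p
    constructor
    · rintro ⟨j, hj, rfl⟩; exact ⟨e j, ⟨j, hj, rfl⟩, (hm' j).symm⟩
    · rintro ⟨d, ⟨j, hj, rfl⟩, rfl⟩; exact ⟨j, hj, (hm' j).symm⟩
  have hB : {p : MvPolynomial σ k | ∃ j : Fin r, i < j ∧ p = m j}
      = (fun d => monomial d (1:k)) '' EB := by
    ext p
    constructor
    · rintro ⟨j, hj, rfl⟩; exact ⟨e j, ⟨j, hj, rfl⟩, (hm' j).symm⟩
    · rintro ⟨d, ⟨j, hj, rfl⟩, rfl⟩; exact ⟨j, hj, (hm' j).symm⟩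
  have hmemchar : ∀ (S : Set (σ →₀ ℕ)) (f : MvPolynomial σ k),
      f ∈ Submodule.colon (Ideal.span ((fun d => monomial d (1:k)) '' S)) (Ideal.span {m i})
        ↔ ∀ c ∈ f.support, ∃ d ∈ S, d ≤ c + e i := by
    intro S f
    rw [Ideal.mem_colon_span_singleton, hm' i, mem_ideal_span_monomial_image,
      truncAux_supp_mul_monomial]
    constructor
    · intro h c hc
      exact h (c + e i) (Finset.mem_map.2 ⟨c, hc, rfl⟩)
    · intro h c' hc'
      obtain ⟨c, hc, rfl⟩ := Finset.mem_map.1 hc'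
      exact h c hc
  have hJ : Submodule.colon (Ideal.span ((fun d => monomial d (1:k)) '' EB))
      (Ideal.span {m i}) = Ideal.span ((fun d => monomial d (1:k)) '' EB') := by
    ext f
    rw [hmemchar EB f, mem_ideal_span_monomial_image]
    refine forall_congr' fun c => forall_congr' fun _ => ?_
    constructor
    · rintro ⟨d, ⟨j, hj, rfl⟩, hd⟩
      exact ⟨e j - e i, ⟨j, hj, rfl⟩, tsub_le_iff_right.2 hd⟩
    · rintro ⟨d, ⟨j, hj, rfl⟩, hd⟩
      exact ⟨e j, ⟨j, hj, rfl⟩, le_trans le_tsub_add (add_le_add_left hd _)⟩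
  rw [hA, hB, truncAux_span_monomial_pow EA (s+1), truncAux_span_monomial_pow EA s, hJ,
    Submodule.add_eq_sup, Submodule.add_eq_sup, ← Ideal.span_union, ← Ideal.span_union,
    ← Set.image_union, ← Set.image_union]
  ext f
  rw [hmemchar _ f, mem_ideal_span_monomial_image]
  refine forall_congr' fun c => forall_congr' fun _ => ?_
  constructor
  · rintro ⟨d, hd, hle⟩
    rcases hd with hd | hd
    · -- d is a sum of s+1 generators of EA
      obtain ⟨M, hcard, hmem, rfl⟩ := hd
      obtain ⟨N, hNle, rfl⟩ := hlift M hmem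
      have hcN : Multiset.card N = s + 1 := by simpa using hcard
      have hN0 : N ≠ 0 := by rintro rfl; simp at hcN
      obtain ⟨j₀, hj₀N, hj₀max⟩ := hmax N hN0 hNle
      refine ⟨((N.erase j₀).map e).sum, Or.inl ⟨(N.erase j₀).map e,
        by simp [Multiset.card_erase_of_mem hj₀N, hcN], ?_, rfl⟩, ?_⟩
      · intro a ha
        obtain ⟨j, hj, rfl⟩ := Multiset.mem_map.1 ha
        exact ⟨j, hNle j (Multiset.mem_of_mem_erase hj), rfl⟩
      · have hMsum : (N.map e).sum = e j₀ + ((N.erase j₀).map e).sum := by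
          conv_lhs => rw [← Multiset.cons_erase hj₀N]
          rw [Multiset.map_cons, Multiset.sum_cons]
        rw [Finsupp.le_def]
        intro v
        have h1 : (N.map e).sum v ≤ c v + e i v := by
          have := Finsupp.le_def.1 hle v
          rwa [Finsupp.add_apply] at this
        rw [hMsum, Finsupp.add_apply] at h1
        by_cases hvi : v ∈ F i
        · by_cases hvj : v ∈ F j₀
          · rw [he j₀ v, if_pos hvj, he i v, if_pos hvi] at h1
            omega
          · have hz : ((N.erase j₀).map e).sum v = 0 := by
              rw [hsumv, Multiset.map_map]
              apply Multiset.sum_eq_zero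
              intro x hx
              obtain ⟨j, hj, rfl⟩ := Multiset.mem_map.1 hx
              have hjN := Multiset.mem_of_mem_erase hj
              show e j v = 0
              rw [he j v, if_neg ?_]
              intro hvj'
              exact hvj (Finset.mem_inter.1
                (hj₀max j hjN (Finset.mem_inter.2 ⟨hvj', hvi⟩))).1
            rw [hz]
            exact Nat.zero_le _
        · rw [he i v, if_neg hvi] at h1
          omega
    · obtain ⟨j, hj, rfl⟩ := hd
      exact ⟨e j - e i, Or.inr ⟨j, hj, rfl⟩, tsub_le_iff_right.2 hle⟩
  · rintro ⟨d, hd, hle⟩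
    rcases hd with hd | hd
    · obtain ⟨M, hcard, hmem, rfl⟩ := hd
      refine ⟨(e i ::ₘ M).sum, Or.inl ⟨e i ::ₘ M, by simp [hcard], ?_, rfl⟩, ?_⟩
      · intro a ha
        rcases Multiset.mem_cons.1 ha with rfl | ha
        exacts [⟨i, le_refl i, rfl⟩, hmem a ha]
      · rw [Multiset.sum_cons, add_comm]
        exact add_le_add_left hle _
    · obtain ⟨j, hj, rfl⟩ := hd
      exact ⟨e j, Or.inr ⟨j, hj, rfl⟩, le_trans le_tsub_add (add_le_add_left hle _)⟩
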